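/- Assume E₁ and E₂ are finite-dimensional, and that: (i) f̃(p*,·,·) and g̃(p*,·,·) are hemicontinuous; (ii) f̃(p,·,·) and g̃(p,·,·) are monotone for every p ∈ M; (iii) for every p ∈ M and every x ∈ E₁, y ∈ E₂, the functions f̃(p,x,·) and g̃(p,y,·) are convex; (iv) f̃(p*,x,x) ≥ 0 for every x ∈ C and g̃(p*,y,y) ≥ 0 for every y ∈ Q; (v) for every x ∈ E₁ and y ∈ E₂, the maps (p,x') ↦ f̃(p,x,x') and (p,y') ↦ g̃(p,y,y') are continuous. Then SEP(f,g,C,Q) is Levitin–Polyak well-posed by perturbations if and only if SEP(f,g,C,Q) has a unique solution. -/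

import Mathlib

open Filter Metric Topology Set

/-- The solution set of the split equilibrium problem SEP(f,g,C,Q). -/
def SEPSol {E₁ E₂ : Type*} [NormedAddCommGroup E₁] [NormedSpace ℝ E₁]
    [NormedAddCommGroup E₂] [NormedSpace ℝ E₂]
    (C : Set E₁) (Q : Set E₂) (A : E₁ →L[ℝ] E₂)
    (f : E₁ → E₁ → ℝ) (g : E₂ → E₂ → ℝ) : Set (E₁ × E₂) :=
  {u | u.1 ∈ C ∧ u.2 ∈ Q ∧ u.2 = A u.1 ∧
    (∀ x ∈ C, 0 ≤ f u.1 x) ∧ (∀ y ∈ Q, 0 ≤ g u.2 y)}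

/-- The approximate solution set S(ε) of the perturbed split equilibrium problem,
where the perturbation parameter ranges over the closed ball M of radius `r`
centered at `pstar`, intersected with the closed ball of radius `ε` around `pstar`. -/
def approxSol {E₁ E₂ N : Type*} [NormedAddCommGroup E₁] [NormedSpace ℝ E₁]
    [NormedAddCommGroup E₂] [NormedSpace ℝ E₂] [NormedAddCommGroup N] [NormedSpace ℝ N]
    (C : Set E₁) (Q : Set E₂) (A : E₁ →L[ℝ] E₂) (pstar : N) (r : ℝ)
    (ft : N → E₁ → E₁ → ℝ) (gt : N → E₂ → E₂ → ℝ) (ε : ℝ) : Set (E₁ × E₂) :=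
  {u | ∃ p : N, ‖p - pstar‖ ≤ r ∧ ‖p - pstar‖ ≤ ε ∧
    infDist u.1 C ≤ ε ∧ infDist u.2 Q ≤ ε ∧ ‖u.2 - A u.1‖ ≤ ε ∧
    (∀ x ∈ C, -ε ≤ ft p u.1 x) ∧ (∀ y ∈ Q, -ε ≤ gt p u.2 y)}

/-- `u` is a generalized approximating sequence corresponding to the parameter
sequence `p` (which lies in the ball M of radius `r` around `pstar` and converges
to `pstar`) for the split equilibrium problem. -/
def GenApproxSeq {E₁ E₂ N : Type*} [NormedAddCommGroup E₁] [NormedSpace ℝ E₁]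
    [NormedAddCommGroup E₂] [NormedSpace ℝ E₂] [NormedAddCommGroup N] [NormedSpace ℝ N]
    (C : Set E₁) (Q : Set E₂) (A : E₁ →L[ℝ] E₂) (pstar : N) (r : ℝ)
    (ft : N → E₁ → E₁ → ℝ) (gt : N → E₂ → E₂ → ℝ)
    (p : ℕ → N) (u : ℕ → E₁ × E₂) : Prop :=
  (∀ n, ‖p n - pstar‖ ≤ r) ∧ Tendsto p atTop (nhds pstar) ∧
  ∃ ε : ℕ → ℝ, (∀ n, 0 < ε n) ∧ Tendsto ε atTop (nhds 0) ∧
    ∀ n, infDist (u n).1 C ≤ ε n ∧ infDist (u n).2 Q ≤ ε n ∧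
      ‖(u n).2 - A (u n).1‖ ≤ ε n ∧
      (∀ x ∈ C, -(ε n) ≤ ft (p n) (u n).1 x) ∧
      (∀ y ∈ Q, -(ε n) ≤ gt (p n) (u n).2 y)

/-- SEP(f,g,C,Q) is Levitin–Polyak well-posed by perturbations: the solution set is a
singleton and every generalized approximating sequence converges to the unique solution. -/
def LPWellPosedPerturb {E₁ E₂ N : Type*} [NormedAddCommGroup E₁] [NormedSpace ℝ E₁]
    [NormedAddCommGroup E₂] [NormedSpace ℝ E₂] [NormedAddCommGroup N] [NormedSpace ℝ N]
    (C : Set E₁) (Q : Set E₂) (A : E₁ →L[ℝ] E₂) (pstar : N) (r : ℝ)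
    (ft : N → E₁ → E₁ → ℝ) (gt : N → E₂ → E₂ → ℝ) : Prop :=
  ∃ ustar : E₁ × E₂, SEPSol C Q A (ft pstar) (gt pstar) = {ustar} ∧
    ∀ (p : ℕ → N) (u : ℕ → E₁ × E₂), GenApproxSeq C Q A pstar r ft gt p u →
      Tendsto u atTop (nhds ustar)

/-- SEP(f,g,C,Q) is Levitin–Polyak well-posed by perturbations in the generalized sense:
the solution set is nonempty and every generalized approximating sequence has a
subsequence converging to some solution. -/
def GenLPWellPosedPerturb {E₁ E₂ N : Type*} [NormedAddCommGroup E₁] [NormedSpace ℝ E₁]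
    [NormedAddCommGroup E₂] [NormedSpace ℝ E₂] [NormedAddCommGroup N] [NormedSpace ℝ N]
    (C : Set E₁) (Q : Set E₂) (A : E₁ →L[ℝ] E₂) (pstar : N) (r : ℝ)
    (ft : N → E₁ → E₁ → ℝ) (gt : N → E₂ → E₂ → ℝ) : Prop :=
  (SEPSol C Q A (ft pstar) (gt pstar)).Nonempty ∧
    ∀ (p : ℕ → N) (u : ℕ → E₁ × E₂), GenApproxSeq C Q A pstar r ft gt p u →
      ∃ ustar ∈ SEPSol C Q A (ft pstar) (gt pstar), ∃ φ : ℕ → ℕ, StrictMono φ ∧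
        Tendsto (u ∘ φ) atTop (nhds ustar)

/-- The Kuratowski measure of noncompactness: the infimum of all `ε > 0` such that the
set can be covered by finitely many sets, each of diameter `< ε`. -/
noncomputable def kuratowskiMNC {X : Type*} [PseudoEMetricSpace X] (s : Set X) : ENNReal :=
  sInf {ε : ENNReal | 0 < ε ∧ ∃ t : Finset (Set X), (s ⊆ ⋃ a ∈ t, (a : Set X)) ∧
    ∀ a ∈ t, EMetric.diam a < ε}


lemma aux_limsup_nonneg {F : ℝ → ℝ}
    (h : ∀ t ∈ Set.Ioc (0:ℝ) 1, 0 ≤ F t) :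
    0 ≤ limsup F (𝓝[>] (0:ℝ)) := by
  have hev : ∀ᶠ t in 𝓝[>] (0:ℝ), 0 ≤ F t := by
    filter_upwards [Ioc_mem_nhdsGT (zero_lt_one)] with t ht using h t ht
  by_cases hb : IsBoundedUnder (· ≤ ·) (𝓝[>] (0:ℝ)) F
  · exact le_limsup_of_frequently_le hev.frequently hb
  · rw [limsup_eq]
    have he : {a : ℝ | ∀ᶠ t in 𝓝[>] (0:ℝ), F t ≤ a} = ∅ := by
      rw [Set.eq_empty_iff_forall_notMem]
      intro a ha
      exact hb ⟨a, eventually_map.mpr ha⟩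
    rw [he, Real.sInf_empty]

lemma minty_aux {E : Type*} [NormedAddCommGroup E] [NormedSpace ℝ E]
    {C : Set E} (hCcv : Convex ℝ C) {f : E → E → ℝ}
    (hhemi : ∀ x y : E, limsup (fun t : ℝ => f (x + t • (y - x)) y) (𝓝[>] (0:ℝ)) ≤ f x y)
    (hconv : ∀ x : E, ConvexOn ℝ Set.univ (f x))
    (hdiag : ∀ x ∈ C, 0 ≤ f x x)
    {u : E} (hu : u ∈ C) (hle : ∀ x ∈ C, f x u ≤ 0) :
    ∀ x ∈ C, 0 ≤ f u x := by
  intro x hx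
  refine le_trans (aux_limsup_nonneg ?_) (hhemi u x)
  intro t ht
  have hxtC : u + t • (x - u) ∈ C := hCcv.add_smul_sub_mem hu hx ⟨ht.1.le, ht.2⟩
  set xt := u + t • (x - u) with hxt
  have hcomb : xt = (1 - t) • u + t • x := by rw [hxt]; module
  have h1 : f xt xt ≤ (1 - t) * f xt u + t * f xt x := by
    have := (hconv xt).2 (Set.mem_univ u) (Set.mem_univ x)
      (by linarith [ht.2] : (0:ℝ) ≤ 1 - t) ht.1.le (by ring)
    rwa [← hcomb] at this
  have h2 : 0 ≤ f xt xt := hdiag xt hxtC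
  have h3 : (1 - t) * f xt u ≤ 0 :=
    mul_nonpos_of_nonneg_of_nonpos (by linarith [ht.2]) (hle xt hxtC)
  nlinarith [ht.1]

lemma mem_of_infDist_le {E : Type*} [NormedAddCommGroup E] {C : Set E}
    (hCcl : IsClosed C) (hCne : C.Nonempty)
    {v : ℕ → E} {vb : E} (hv : Tendsto v atTop (𝓝 vb))
    {ε : ℕ → ℝ} (hε : Tendsto ε atTop (𝓝 0))
    (hd : ∀ n, infDist (v n) C ≤ ε n) : vb ∈ C := by
  rw [hCcl.mem_iff_infDist_zero hCne]
  have h1 : Tendsto (fun n => infDist (v n) C) atTop (𝓝 (infDist vb C)) :=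
    ((continuous_infDist_pt C).tendsto vb).comp hv
  have h2 : infDist vb C ≤ 0 := le_of_tendsto_of_tendsto h1 hε (Eventually.of_forall hd)
  exact le_antisymm h2 infDist_nonneg

lemma le_zero_limit {E N : Type*} [NormedAddCommGroup E] [NormedSpace ℝ E]
    [NormedAddCommGroup N] [NormedSpace ℝ N]
    {f : N → E → E → ℝ} {pstar : N} {r : ℝ} {C : Set E}
    (hmono : ∀ p : N, ‖p - pstar‖ ≤ r → ∀ x y : E, f p x y + f p y x ≤ 0)
    (hconv : ∀ p : N, ‖p - pstar‖ ≤ r → ∀ x : E, ConvexOn ℝ Set.univ (f p x))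
    (hcont : ∀ x : E, Continuous fun qq : N × E => f qq.1 x qq.2)
    {q : ℕ → N} (hqr : ∀ n, ‖q n - pstar‖ ≤ r) (hq : Tendsto q atTop (𝓝 pstar))
    {t : ℕ → ℝ} {τ : ℝ} (ht0 : ∀ n, 0 ≤ t n) (ht1 : ∀ n, t n ≤ 1)
    (htlim : Tendsto t atTop (𝓝 τ))
    {δ : ℕ → ℝ} (hδ : Tendsto δ atTop (𝓝 0))
    {v : ℕ → E} (happ : ∀ n, ∀ x ∈ C, -δ n ≤ f (q n) (v n) x)
    {xstar : E} (hstar : ∀ x ∈ C, f pstar x xstar ≤ 0)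
    {wb : E} (hwlim : Tendsto (fun n => xstar + t n • (v n - xstar)) atTop (𝓝 wb)) :
    ∀ x ∈ C, f pstar x wb ≤ 0 := by
  intro x hx
  have hτ0 : 0 ≤ τ := le_of_tendsto_of_tendsto tendsto_const_nhds htlim (Eventually.of_forall ht0)
  have hτ1 : τ ≤ 1 := le_of_tendsto_of_tendsto htlim tendsto_const_nhds (Eventually.of_forall ht1)
  have hineq : ∀ n, f (q n) x (xstar + t n • (v n - xstar))
      ≤ (1 - t n) * f (q n) x xstar + t n * δ n := by
    intro n
    have hcomb : xstar + t n • (v n - xstar) = (1 - t n) • xstar + t n • (v n) := by module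
    have h1 := (hconv (q n) (hqr n) x).2 (Set.mem_univ xstar) (Set.mem_univ (v n))
      (show (0:ℝ) ≤ 1 - t n by linarith [ht1 n]) (ht0 n)
      (show (1 - t n) + t n = 1 by ring)
    rw [← hcomb] at h1
    simp only [smul_eq_mul] at h1
    have h2 : f (q n) x (v n) ≤ δ n := by
      have hm := hmono (q n) (hqr n) (v n) x
      have h3 := happ n x hx
      linarith
    have h4 : t n * f (q n) x (v n) ≤ t n * δ n := mul_le_mul_of_nonneg_left h2 (ht0 n)
    linarith
  have hlhs : Tendsto (fun n => f (q n) x (xstar + t n • (v n - xstar))) atTop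
      (𝓝 (f pstar x wb)) :=
    ((hcont x).tendsto (pstar, wb)).comp (hq.prodMk_nhds hwlim)
  have hfc : Tendsto (fun n => f (q n) x xstar) atTop (𝓝 (f pstar x xstar)) :=
    ((hcont x).tendsto (pstar, xstar)).comp (hq.prodMk_nhds tendsto_const_nhds)
  have hrhs : Tendsto (fun n => (1 - t n) * f (q n) x xstar + t n * δ n) atTop
      (𝓝 ((1 - τ) * f pstar x xstar + τ * 0)) :=
    ((tendsto_const_nhds.sub htlim).mul hfc).add (htlim.mul hδ)
  have h := le_of_tendsto_of_tendsto hlhs hrhs (Eventually.of_forall hineq)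
  have h5 : (1 - τ) * f pstar x xstar ≤ 0 :=
    mul_nonpos_of_nonneg_of_nonpos (by linarith) (hstar x hx)
  rw [mul_zero, add_zero] at h
  linarith


/-- **Theorem 5.1.** In finite dimensions, under hemicontinuity, monotonicity, convexity,
diagonal nonnegativity and continuity assumptions on the perturbed bifunctions,
SEP(f,g,C,Q) is Levitin–Polyak well-posed by perturbations if and only if it has a
unique solution. -/
theorem sep_lp_wellposed_iff_existsUnique
    {E₁ E₂ N : Type*} [NormedAddCommGroup E₁] [NormedSpace ℝ E₁] [CompleteSpace E₁]
    [NormedAddCommGroup E₂] [NormedSpace ℝ E₂] [CompleteSpace E₂]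
    [NormedAddCommGroup N] [NormedSpace ℝ N]
    (C : Set E₁) (Q : Set E₂) (hCne : C.Nonempty) (hCcl : IsClosed C) (hCcv : Convex ℝ C)
    (hQne : Q.Nonempty) (hQcl : IsClosed Q) (hQcv : Convex ℝ Q)
    (A : E₁ →L[ℝ] E₂) (pstar : N) (r : ℝ) (hr : 0 < r)
    (ftil : N → E₁ → E₁ → ℝ) (gtil : N → E₂ → E₂ → ℝ)
    [FiniteDimensional ℝ E₁] [FiniteDimensional ℝ E₂]
    (hfhemi : ∀ x y : E₁,
      limsup (fun t : ℝ => ftil pstar (x + t • (y - x)) y) (𝓝[>] (0 : ℝ)) ≤ ftil pstar x y)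
    (hghemi : ∀ x y : E₂,
      limsup (fun t : ℝ => gtil pstar (x + t • (y - x)) y) (𝓝[>] (0 : ℝ)) ≤ gtil pstar x y)
    (hfmono : ∀ p : N, ‖p - pstar‖ ≤ r → ∀ x y : E₁, ftil p x y + ftil p y x ≤ 0)
    (hgmono : ∀ p : N, ‖p - pstar‖ ≤ r → ∀ x y : E₂, gtil p x y + gtil p y x ≤ 0)
    (hfconv : ∀ p : N, ‖p - pstar‖ ≤ r → ∀ x : E₁, ConvexOn ℝ Set.univ (ftil p x))
    (hgconv : ∀ p : N, ‖p - pstar‖ ≤ r → ∀ y : E₂, ConvexOn ℝ Set.univ (gtil p y))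
    (hfdiag : ∀ x ∈ C, 0 ≤ ftil pstar x x)
    (hgdiag : ∀ y ∈ Q, 0 ≤ gtil pstar y y)
    (hfcont : ∀ x : E₁, Continuous fun q : N × E₁ => ftil q.1 x q.2)
    (hgcont : ∀ y : E₂, Continuous fun q : N × E₂ => gtil q.1 y q.2) :
    LPWellPosedPerturb C Q A pstar r ftil gtil ↔
      ∃! u : E₁ × E₂, u ∈ SEPSol C Q A (ftil pstar) (gtil pstar) := by

  constructor
  · rintro ⟨us, hS, -⟩
    refine ⟨us, ?_, ?_⟩
    · rw [hS]; exact Set.mem_singleton us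
    · intro v hv; rw [hS] at hv; exact hv
  · rintro ⟨ustar, hust, huniq⟩
    have hSset : SEPSol C Q A (ftil pstar) (gtil pstar) = {ustar} :=
      Set.eq_singleton_iff_unique_mem.mpr ⟨hust, huniq⟩
    simp only [SEPSol, Set.mem_setOf_eq] at hust
    obtain ⟨hxC, hyQ, hyAx, hfs, hgs⟩ := hust
    have hprs : ‖pstar - pstar‖ ≤ r := by simp [hr.le]
    have hfstar : ∀ x ∈ C, ftil pstar x ustar.1 ≤ 0 := by
      intro x hx
      have h := hfmono pstar hprs x ustar.1
      have h2 := hfs x hx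
      linarith
    have hgstar : ∀ y ∈ Q, gtil pstar y ustar.2 ≤ 0 := by
      intro y hy
      have h := hgmono pstar hprs y ustar.2
      have h2 := hgs y hy
      linarith
    refine ⟨ustar, hSset, ?_⟩
    intro p u hseq
    obtain ⟨hpr, hp, ε, hεpos, hε0, hcond⟩ := hseq
    -- limits of approximating-type sequences are solutions
    have key : ∀ (w : ℕ → E₁ × E₂) (wb : E₁ × E₂), Tendsto w atTop (nhds wb) →
        ∀ (δ : ℕ → ℝ), Tendsto δ atTop (nhds 0) →
        (∀ n, infDist (w n).1 C ≤ δ n) → (∀ n, infDist (w n).2 Q ≤ δ n) →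
        (∀ n, ‖(w n).2 - A (w n).1‖ ≤ δ n) →
        (∀ x ∈ C, ftil pstar x wb.1 ≤ 0) → (∀ y ∈ Q, gtil pstar y wb.2 ≤ 0) →
        wb ∈ SEPSol C Q A (ftil pstar) (gtil pstar) := by
      intro w wb hw δ hδ hd1 hd2 hdA hlef hleg
      have hw1 : Tendsto (fun n => (w n).1) atTop (nhds wb.1) :=
        (continuous_fst.tendsto wb).comp hw
      have hw2 : Tendsto (fun n => (w n).2) atTop (nhds wb.2) :=
        (continuous_snd.tendsto wb).comp hw
      have hmem1 : wb.1 ∈ C := mem_of_infDist_le hCcl hCne hw1 hδ hd1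
      have hmem2 : wb.2 ∈ Q := mem_of_infDist_le hQcl hQne hw2 hδ hd2
      have hA : wb.2 = A wb.1 := by
        have hcA : Continuous fun zz : E₁ × E₂ => ‖zz.2 - A zz.1‖ :=
          (continuous_snd.sub (A.continuous.comp continuous_fst)).norm
        have h1 : Tendsto (fun n => ‖(w n).2 - A (w n).1‖) atTop (nhds ‖wb.2 - A wb.1‖) :=
          (hcA.tendsto wb).comp hw
        have h2 := le_of_tendsto_of_tendsto h1 hδ (Eventually.of_forall hdA)
        have h0 : wb.2 - A wb.1 = 0 := norm_eq_zero.mp (le_antisymm h2 (norm_nonneg _))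
        exact sub_eq_zero.mp h0
      show wb.1 ∈ C ∧ wb.2 ∈ Q ∧ wb.2 = A wb.1 ∧
        (∀ x ∈ C, 0 ≤ ftil pstar wb.1 x) ∧ (∀ y ∈ Q, 0 ≤ gtil pstar wb.2 y)
      exact ⟨hmem1, hmem2, hA,
        minty_aux hCcv hfhemi (fun x => hfconv pstar hprs x) hfdiag hmem1 hlef,
        minty_aux hQcv hghemi (fun y => hgconv pstar hprs y) hgdiag hmem2 hleg⟩
    -- boundedness of the approximating sequence
    have hbdd : ∃ R : ℝ, ∀ n, ‖u n - ustar‖ ≤ R := by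
      by_contra hub
      push_neg at hub
      have hfreq : ∀ m : ℕ, ∃ᶠ k in atTop, (m : ℝ) + 1 < ‖u k - ustar‖ := by
        intro m
        rw [Filter.frequently_atTop]
        intro b
        obtain ⟨n, hn⟩ := hub (((m : ℝ) + 1) + ∑ i ∈ Finset.range b, ‖u i - ustar‖)
        have hsumnn : 0 ≤ ∑ i ∈ Finset.range b, ‖u i - ustar‖ :=
          Finset.sum_nonneg fun i _ => norm_nonneg _
        refine ⟨n, ?_, by linarith⟩
        by_contra hnb
        push_neg at hnb
        have hsum : ‖u n - ustar‖ ≤ ∑ i ∈ Finset.range b, ‖u i - ustar‖ :=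
          Finset.single_le_sum (fun i _ => norm_nonneg (u i - ustar)) (Finset.mem_range.mpr hnb)
        have hm1 : (0:ℝ) ≤ (m : ℝ) + 1 := by positivity
        linarith
      obtain ⟨φ, hφmono, hφ⟩ := extraction_forall_of_frequently hfreq
      set a : ℕ → ℝ := fun n => ‖u (φ n) - ustar‖ with ha
      have hapos : ∀ n, 0 < a n := fun n => lt_of_le_of_lt (by positivity) (hφ n)
      set t : ℕ → ℝ := fun n => (a n)⁻¹ with hT
      have htpos : ∀ n, 0 < t n := fun n => inv_pos.mpr (hapos n)
      have hta : ∀ n, t n * a n = 1 := fun n => inv_mul_cancel₀ (hapos n).ne'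
      have htle1 : ∀ n, t n ≤ 1 := by
        intro n
        have h1 : 1 < a n := by
          have := hφ n
          have h2 : (0:ℝ) ≤ (n : ℝ) := Nat.cast_nonneg n
          linarith
        nlinarith [hta n, htpos n]
      have htle : ∀ n, t n ≤ ((n : ℝ) + 1)⁻¹ := fun n =>
        inv_anti₀ (by positivity) (hφ n).le
      have ht0 : Tendsto t atTop (nhds 0) := by
        apply squeeze_zero (fun n => (htpos n).le) htle
        simpa [one_div] using tendsto_one_div_add_atTop_nhds_zero_nat (𝕜 := ℝ)
      set z : ℕ → E₁ × E₂ := fun n => ustar + t n • (u (φ n) - ustar) with hz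
      have hz1 : ∀ n, (z n).1 = ustar.1 + t n • ((u (φ n)).1 - ustar.1) := by
        intro n; rw [hz]; simp
      have hz2 : ∀ n, (z n).2 = ustar.2 + t n • ((u (φ n)).2 - ustar.2) := by
        intro n; rw [hz]; simp
      have hznorm : ∀ n, ‖z n - ustar‖ = 1 := by
        intro n
        show ‖ustar + t n • (u (φ n) - ustar) - ustar‖ = 1
        rw [add_sub_cancel_left, norm_smul, Real.norm_eq_abs, abs_of_pos (htpos n)]
        exact hta n
      have hzsph : ∀ n, z n ∈ sphere ustar 1 := fun n => by
        rw [mem_sphere, dist_eq_norm]; exact hznorm n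
      obtain ⟨zb, hzbcl, ψ, hψmono, hzψ⟩ := tendsto_subseq_of_bounded isBounded_sphere hzsph
      rw [isClosed_sphere.closure_eq] at hzbcl
      have hzbd : dist zb ustar = 1 := mem_sphere.mp hzbcl
      have hzd1 : ∀ k, infDist (z k).1 C ≤ ε (φ k) := by
        intro k
        obtain ⟨c, hcC, hcd⟩ := hCcl.exists_infDist_eq_dist hCne (u (φ k)).1
        have hcε : dist (u (φ k)).1 c ≤ ε (φ k) := by
          rw [← hcd]; exact (hcond (φ k)).1
        have hwC : ustar.1 + t k • (c - ustar.1) ∈ C :=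
          hCcv.add_smul_sub_mem hxC hcC ⟨(htpos k).le, htle1 k⟩
        refine le_trans (infDist_le_dist_of_mem hwC) ?_
        rw [dist_eq_norm, hz1 k]
        have heq : ustar.1 + t k • ((u (φ k)).1 - ustar.1) - (ustar.1 + t k • (c - ustar.1))
            = t k • ((u (φ k)).1 - c) := by module
        rw [heq, norm_smul, Real.norm_eq_abs, abs_of_pos (htpos k)]
        calc t k * ‖(u (φ k)).1 - c‖ ≤ 1 * ε (φ k) := by
              apply mul_le_mul (htle1 k) ?_ (norm_nonneg _) zero_le_one
              rw [← dist_eq_norm]; exact hcε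
          _ = ε (φ k) := one_mul _
      have hzd2 : ∀ k, infDist (z k).2 Q ≤ ε (φ k) := by
        intro k
        obtain ⟨c, hcQ, hcd⟩ := hQcl.exists_infDist_eq_dist hQne (u (φ k)).2
        have hcε : dist (u (φ k)).2 c ≤ ε (φ k) := by
          rw [← hcd]; exact (hcond (φ k)).2.1
        have hwQ : ustar.2 + t k • (c - ustar.2) ∈ Q :=
          hQcv.add_smul_sub_mem hyQ hcQ ⟨(htpos k).le, htle1 k⟩
        refine le_trans (infDist_le_dist_of_mem hwQ) ?_
        rw [dist_eq_norm, hz2 k]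
        have heq : ustar.2 + t k • ((u (φ k)).2 - ustar.2) - (ustar.2 + t k • (c - ustar.2))
            = t k • ((u (φ k)).2 - c) := by module
        rw [heq, norm_smul, Real.norm_eq_abs, abs_of_pos (htpos k)]
        calc t k * ‖(u (φ k)).2 - c‖ ≤ 1 * ε (φ k) := by
              apply mul_le_mul (htle1 k) ?_ (norm_nonneg _) zero_le_one
              rw [← dist_eq_norm]; exact hcε
          _ = ε (φ k) := one_mul _
      have hzdA : ∀ k, ‖(z k).2 - A ((z k).1)‖ ≤ ε (φ k) := by
        intro k
        have heq : (z k).2 - A ((z k).1) = t k • ((u (φ k)).2 - A ((u (φ k)).1)) := by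
          rw [hz1 k, hz2 k, map_add, map_smul, map_sub, ← hyAx]
          module
        rw [heq, norm_smul, Real.norm_eq_abs, abs_of_pos (htpos k)]
        calc t k * ‖(u (φ k)).2 - A ((u (φ k)).1)‖ ≤ 1 * ε (φ k) :=
              mul_le_mul (htle1 k) ((hcond (φ k)).2.2.1) (norm_nonneg _) zero_le_one
          _ = ε (φ k) := one_mul _
      have hσ : Tendsto (fun n => φ (ψ n)) atTop atTop :=
        (hφmono.comp hψmono).tendsto_atTop
      have hδ0 : Tendsto (fun n => ε (φ (ψ n))) atTop (nhds 0) := hε0.comp hσ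
      have hz1ψ : Tendsto (fun n => (z (ψ n)).1) atTop (nhds zb.1) :=
        (continuous_fst.tendsto zb).comp hzψ
      have hz2ψ : Tendsto (fun n => (z (ψ n)).2) atTop (nhds zb.2) :=
        (continuous_snd.tendsto zb).comp hzψ
      have htψ : Tendsto (fun n => t (ψ n)) atTop (nhds 0) := ht0.comp hψmono.tendsto_atTop
      have hlef : ∀ x ∈ C, ftil pstar x zb.1 ≤ 0 := by
        have hwlim : Tendsto (fun n => ustar.1 + t (ψ n) • ((u (φ (ψ n))).1 - ustar.1))
            atTop (nhds zb.1) := by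
          have hfe : (fun n => ustar.1 + t (ψ n) • ((u (φ (ψ n))).1 - ustar.1))
              = fun n => (z (ψ n)).1 := funext fun n => (hz1 (ψ n)).symm
          rw [hfe]; exact hz1ψ
        exact le_zero_limit hfmono hfconv hfcont (fun n => hpr (φ (ψ n))) (hp.comp hσ)
          (fun n => (htpos (ψ n)).le) (fun n => htle1 (ψ n)) htψ hδ0
          (fun n x hx => (hcond (φ (ψ n))).2.2.2.1 x hx) hfstar hwlim
      have hleg : ∀ y ∈ Q, gtil pstar y zb.2 ≤ 0 := by
        have hwlim : Tendsto (fun n => ustar.2 + t (ψ n) • ((u (φ (ψ n))).2 - ustar.2))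
            atTop (nhds zb.2) := by
          have hfe : (fun n => ustar.2 + t (ψ n) • ((u (φ (ψ n))).2 - ustar.2))
              = fun n => (z (ψ n)).2 := funext fun n => (hz2 (ψ n)).symm
          rw [hfe]; exact hz2ψ
        exact le_zero_limit hgmono hgconv hgcont (fun n => hpr (φ (ψ n))) (hp.comp hσ)
          (fun n => (htpos (ψ n)).le) (fun n => htle1 (ψ n)) htψ hδ0
          (fun n y hy => (hcond (φ (ψ n))).2.2.2.2 y hy) hgstar hwlim
      have hzsol := key (fun n => z (ψ n)) zb hzψ (fun n => ε (φ (ψ n))) hδ0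
        (fun n => hzd1 (ψ n)) (fun n => hzd2 (ψ n)) (fun n => hzdA (ψ n)) hlef hleg
      have hzeq : zb = ustar := huniq zb hzsol
      rw [hzeq, dist_self] at hzbd
      norm_num at hzbd
    obtain ⟨R, hR⟩ := hbdd
    apply tendsto_of_subseq_tendsto
    intro ns hns
    have hmem : ∀ n, u (ns n) ∈ closedBall ustar R := fun n => by
      rw [mem_closedBall, dist_eq_norm]; exact hR (ns n)
    obtain ⟨ub, -, ms, hmsmono, hums⟩ := tendsto_subseq_of_bounded isBounded_closedBall hmem
    have hσ : Tendsto (fun n => ns (ms n)) atTop atTop := hns.comp hmsmono.tendsto_atTop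
    have hδ0 : Tendsto (fun n => ε (ns (ms n))) atTop (nhds 0) := hε0.comp hσ
    have hub1 : Tendsto (fun n => (u (ns (ms n))).1) atTop (nhds ub.1) :=
      (continuous_fst.tendsto ub).comp hums
    have hub2 : Tendsto (fun n => (u (ns (ms n))).2) atTop (nhds ub.2) :=
      (continuous_snd.tendsto ub).comp hums
    have hlef : ∀ x ∈ C, ftil pstar x ub.1 ≤ 0 := by
      have hwlim : Tendsto (fun n => ustar.1 + (1:ℝ) • ((u (ns (ms n))).1 - ustar.1))
          atTop (nhds ub.1) := by
        have hfe : (fun n => ustar.1 + (1:ℝ) • ((u (ns (ms n))).1 - ustar.1))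
            = fun n => (u (ns (ms n))).1 := funext fun n => by module
        rw [hfe]; exact hub1
      exact le_zero_limit hfmono hfconv hfcont (fun n => hpr (ns (ms n))) (hp.comp hσ)
        (fun n => zero_le_one) (fun n => le_refl (1:ℝ)) tendsto_const_nhds hδ0
        (fun n x hx => (hcond (ns (ms n))).2.2.2.1 x hx) hfstar hwlim
    have hleg : ∀ y ∈ Q, gtil pstar y ub.2 ≤ 0 := by
      have hwlim : Tendsto (fun n => ustar.2 + (1:ℝ) • ((u (ns (ms n))).2 - ustar.2))
          atTop (nhds ub.2) := by
        have hfe : (fun n => ustar.2 + (1:ℝ) • ((u (ns (ms n))).2 - ustar.2))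
            = fun n => (u (ns (ms n))).2 := funext fun n => by module
        rw [hfe]; exact hub2
      exact le_zero_limit hgmono hgconv hgcont (fun n => hpr (ns (ms n))) (hp.comp hσ)
        (fun n => zero_le_one) (fun n => le_refl (1:ℝ)) tendsto_const_nhds hδ0
        (fun n y hy => (hcond (ns (ms n))).2.2.2.2 y hy) hgstar hwlim
    have hsol := key (fun n => u (ns (ms n))) ub hums (fun n => ε (ns (ms n))) hδ0
      (fun n => (hcond (ns (ms n))).1) (fun n => (hcond (ns (ms n))).2.1)
      (fun n => (hcond (ns (ms n))).2.2.1) hlef hleg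
    have hubeq : ub = ustar := huniq ub hsol
    refine ⟨ms, ?_⟩
    rw [← hubeq]
    exact hums
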